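/- In the soft product topology on ∏_i X_i with parameter set ∏_i E_i, the soft closure of a soft cartesian product of soft sets equals the soft cartesian product of their soft closures: cl(∏_i (F_i,E_i)) = ∏_i cl(F_i,E_i). -/
import Mathlib


/-- τ is a soft topology on `X` with parameter set `E`. -/
def IsSoftTopology {X E : Type*} (τ : Set (E → Set X)) : Prop :=
  (fun _ => (∅ : Set X)) ∈ τ ∧
  (fun _ => (Set.univ : Set X)) ∈ τ ∧
  (∀ F G : E → Set X, F ∈ τ → G ∈ τ → (fun e => F e ∩ G e) ∈ τ) ∧
  (∀ 𝒜 : Set (E → Set X), 𝒜 ⊆ τ → (fun e => ⋃ F ∈ 𝒜, F e) ∈ τ)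

/-- A soft set is soft closed iff its soft complement is soft open. -/
def IsSoftClosed {X E : Type*} (τ : Set (E → Set X)) (C : E → Set X) : Prop :=
  (fun e => (C e)ᶜ) ∈ τ

/-- The soft closure: soft intersection of all soft closed soft supersets. -/
def softClosure {X E : Type*} (τ : Set (E → Set X)) (F : E → Set X) : E → Set X :=
  fun e => ⋂ C ∈ {C : E → Set X | IsSoftClosed τ C ∧ ∀ e', F e' ⊆ C e'}, C e

def softImage {U U' E E' : Type*} (φ : U → U') (ψ : E → E')
    (F : E → Set U) : E' → Set U' :=
  fun e' => ⋃ e ∈ ψ ⁻¹' {e'}, φ '' F e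

def softProd {I : Type*} {U : I → Type*} {E : I → Type*}
    (F : ∀ i, E i → Set (U i)) : (∀ i, E i) → Set (∀ i, U i) :=
  fun e => Set.pi Set.univ (fun i => F i (e i))

/-- The soft open subbase of the soft product topology: soft inverse images of
soft open sets under the soft projection mappings. -/
def productSubbase {I : Type*} {Xi : I → Type*} {Ei : I → Type*}
    (τi : ∀ i, Set (Ei i → Set (Xi i))) : Set ((∀ i, Ei i) → Set (∀ i, Xi i)) :=
  {S | ∃ i, ∃ G ∈ τi i, S = fun e => {x : ∀ j, Xi j | x i ∈ G (e i)}}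

/-- The soft topology generated by a soft open subbase. -/
def generatedSoftTopology {X E : Type*} (S : Set (E → Set X)) : Set (E → Set X) :=
  ⋂₀ {τ | IsSoftTopology τ ∧ S ⊆ τ}

section Basic
variable {X E : Type*} {τ : Set (E → Set X)}

lemma subset_softClosure (F : E → Set X) (e : E) : F e ⊆ softClosure τ F e := by
  intro x hx
  simp only [softClosure, Set.mem_iInter]
  intro C hC
  exact hC.2 e hx

lemma softClosure_min {F C : E → Set X} (hC : IsSoftClosed τ C)
    (hFC : ∀ e, F e ⊆ C e) (e : E) : softClosure τ F e ⊆ C e := by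
  intro x hx
  simp only [softClosure, Set.mem_iInter] at hx
  exact hx C ⟨hC, hFC⟩

lemma isSoftClosed_softClosure (hτ : IsSoftTopology τ) (F : E → Set X) :
    IsSoftClosed τ (softClosure τ F) := by
  have key : (fun e => (softClosure τ F e)ᶜ)
      = fun e => ⋃ G ∈ (fun C : E → Set X => fun e => (C e)ᶜ) ''
        {C | IsSoftClosed τ C ∧ ∀ e', F e' ⊆ C e'}, G e := by
    funext e; ext x
    simp [softClosure]
  unfold IsSoftClosed
  rw [key]
  apply hτ.2.2.2
  rintro G ⟨C, hC, rfl⟩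
  exact hC.1

lemma mem_softClosure_iff (hτ : IsSoftTopology τ) (F : E → Set X) (e : E) (x : X) :
    x ∈ softClosure τ F e ↔ ∀ G ∈ τ, x ∈ G e → ∃ e', (G e' ∩ F e').Nonempty := by
  constructor
  · intro hx G hG hxG
    by_contra h
    have hclosed : IsSoftClosed τ (fun e' => (G e')ᶜ) := by
      unfold IsSoftClosed
      simpa using hG
    have hsup : ∀ e', F e' ⊆ (G e')ᶜ := fun e' y hy hyG => h ⟨e', y, hyG, hy⟩
    exact softClosure_min hclosed hsup e hx hxG
  · intro h
    simp only [softClosure, Set.mem_iInter]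
    rintro C ⟨hC, hFC⟩
    by_contra hxC
    obtain ⟨e', y, hyG, hyF⟩ := h _ hC hxC
    exact hyG (hFC e' hyF)

lemma isSoftTopology_generated (S : Set (E → Set X)) :
    IsSoftTopology (generatedSoftTopology S) := by
  refine ⟨?_, ?_, ?_, ?_⟩
  · intro τ' hτ'; exact hτ'.1.1
  · intro τ' hτ'; exact hτ'.1.2.1
  · intro F G hF hG τ' hτ'
    exact hτ'.1.2.2.1 F G (hF τ' hτ') (hG τ' hτ')
  · intro 𝒜 h𝒜 τ' hτ'
    exact hτ'.1.2.2.2 𝒜 (fun B hB => h𝒜 hB τ' hτ')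

lemma subbase_subset_generated (S : Set (E → Set X)) : S ⊆ generatedSoftTopology S :=
  fun _ hB _ hτ' => hτ'.2 hB

lemma generated_subset {S τ' : Set (E → Set X)} (h1 : IsSoftTopology τ') (h2 : S ⊆ τ') :
    generatedSoftTopology S ⊆ τ' := fun _ hB => hB τ' ⟨h1, h2⟩

end Basic

section Prod
variable {I : Type*} {Xi : I → Type*} {Ei : I → Type*}

def finInter (τi : ∀ i, Set (Ei i → Set (Xi i))) : Set ((∀ i, Ei i) → Set (∀ i, Xi i)) :=
  {B | ∃ (J : Finset I) (H : ∀ j, Ei j → Set (Xi j)), (∀ j, H j ∈ τi j) ∧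
    B = fun e => {x : ∀ j, Xi j | ∀ j ∈ J, x j ∈ H j (e j)}}

def tau' (τi : ∀ i, Set (Ei i → Set (Xi i))) : Set ((∀ i, Ei i) → Set (∀ i, Xi i)) :=
  {G | ∃ 𝒜 ⊆ finInter τi, G = fun e => ⋃ B ∈ 𝒜, B e}

lemma finInter_inter {τi : ∀ i, Set (Ei i → Set (Xi i))}
    (hτi : ∀ i, IsSoftTopology (τi i)) {B C : (∀ i, Ei i) → Set (∀ i, Xi i)}
    (hB : B ∈ finInter τi) (hC : C ∈ finInter τi) :
    (fun e => B e ∩ C e) ∈ finInter τi := by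
  classical
  obtain ⟨J, H, hH, rfl⟩ := hB
  obtain ⟨J', H', hH', rfl⟩ := hC
  refine ⟨J ∪ J', fun j => fun a => {v | (j ∈ J → v ∈ H j a) ∧ (j ∈ J' → v ∈ H' j a)}, ?_, ?_⟩
  · intro j
    show (fun a => {v | (j ∈ J → v ∈ H j a) ∧ (j ∈ J' → v ∈ H' j a)}) ∈ τi j
    by_cases hj : j ∈ J <;> by_cases hj' : j ∈ J'
    · have h : (fun a => {v | (j ∈ J → v ∈ H j a) ∧ (j ∈ J' → v ∈ H' j a)})
          = fun a => H j a ∩ H' j a := by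
        funext a; ext v; simp [hj, hj']
      rw [h]; exact (hτi j).2.2.1 _ _ (hH j) (hH' j)
    · have h : (fun a => {v | (j ∈ J → v ∈ H j a) ∧ (j ∈ J' → v ∈ H' j a)}) = H j := by
        funext a; ext v; simp [hj, hj']
      rw [h]; exact hH j
    · have h : (fun a => {v | (j ∈ J → v ∈ H j a) ∧ (j ∈ J' → v ∈ H' j a)}) = H' j := by
        funext a; ext v; simp [hj, hj']
      rw [h]; exact hH' j
    · have h : (fun a => {v | (j ∈ J → v ∈ H j a) ∧ (j ∈ J' → v ∈ H' j a)})
          = fun _ => (Set.univ : Set (Xi j)) := by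
        funext a; ext v; simp [hj, hj']
      rw [h]; exact (hτi j).2.1
  · funext e; ext x
    simp only [Set.mem_inter_iff, Set.mem_setOf_eq, Finset.mem_union]
    constructor
    · rintro ⟨h1, h2⟩ j _
      exact ⟨fun hjJ => h1 j hjJ, fun hjJ' => h2 j hjJ'⟩
    · intro h
      exact ⟨fun j hj => (h j (Or.inl hj)).1 hj, fun j hj => (h j (Or.inr hj)).2 hj⟩

lemma isSoftTopology_tau' {τi : ∀ i, Set (Ei i → Set (Xi i))}
    (hτi : ∀ i, IsSoftTopology (τi i)) : IsSoftTopology (tau' τi) := by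
  classical
  refine ⟨?_, ?_, ?_, ?_⟩
  · exact ⟨∅, Set.empty_subset _, by funext e; simp⟩
  · refine ⟨{fun _ => Set.univ}, ?_, ?_⟩
    · intro B hB
      rw [Set.mem_singleton_iff] at hB
      subst hB
      refine ⟨∅, fun j _ => Set.univ, fun j => (hτi j).2.1, ?_⟩
      funext e; ext x; simp
    · funext e; ext x; simp
  · rintro F G ⟨𝒜, h𝒜, rfl⟩ ⟨ℬ, hℬ, rfl⟩
    refine ⟨{D | ∃ B ∈ 𝒜, ∃ C ∈ ℬ, D = fun e => B e ∩ C e}, ?_, ?_⟩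
    · rintro D ⟨B, hB, C, hC, rfl⟩
      exact finInter_inter hτi (h𝒜 hB) (hℬ hC)
    · funext e; ext x
      simp only [Set.mem_inter_iff, Set.mem_iUnion, Set.mem_setOf_eq]
      constructor
      · rintro ⟨⟨B, hB, hxB⟩, ⟨C, hC, hxC⟩⟩
        exact ⟨fun e => B e ∩ C e, ⟨B, hB, C, hC, rfl⟩, hxB, hxC⟩
      · rintro ⟨D, ⟨B, hB, C, hC, rfl⟩, hxB, hxC⟩
        exact ⟨⟨B, hB, hxB⟩, ⟨C, hC, hxC⟩⟩
  · intro 𝒜fam hfam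
    have hex : ∀ S, ∃ 𝒜, S ∈ 𝒜fam →
        (𝒜 ⊆ finInter τi ∧ S = fun e => ⋃ B ∈ 𝒜, B e) := by
      intro S
      by_cases hS : S ∈ 𝒜fam
      · obtain ⟨𝒜, h1, h2⟩ := hfam hS
        exact ⟨𝒜, fun _ => ⟨h1, h2⟩⟩
      · exact ⟨∅, fun h => absurd h hS⟩
    choose f hf using hex
    refine ⟨{B | ∃ S ∈ 𝒜fam, B ∈ f S}, ?_, ?_⟩
    · rintro B ⟨S, hS, hB⟩
      exact ((hf S) hS).1 hB
    · funext e; ext x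
      simp only [Set.mem_iUnion, Set.mem_setOf_eq]
      constructor
      · rintro ⟨S, hS, hx⟩
        rw [((hf S) hS).2] at hx
        simp only [Set.mem_iUnion] at hx
        obtain ⟨B, hB, hx⟩ := hx
        exact ⟨B, ⟨S, hS, hB⟩, hx⟩
      · rintro ⟨B, ⟨S, hS, hB⟩, hx⟩
        refine ⟨S, hS, ?_⟩
        rw [((hf S) hS).2]
        simp only [Set.mem_iUnion]
        exact ⟨B, hB, hx⟩

lemma subbase_subset_tau' {τi : ∀ i, Set (Ei i → Set (Xi i))}
    (hτi : ∀ i, IsSoftTopology (τi i)) : productSubbase τi ⊆ tau' τi := by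
  classical
  rintro S ⟨i, G, hG, rfl⟩
  refine ⟨{fun e => {x : ∀ j, Xi j | x i ∈ G (e i)}}, ?_, ?_⟩
  · intro B hB
    rw [Set.mem_singleton_iff] at hB
    subst hB
    refine ⟨{i}, Function.update (fun j (_ : Ei j) => (Set.univ : Set (Xi j))) i G, ?_, ?_⟩
    · intro j
      by_cases h : j = i
      · subst h
        rw [Function.update_self]
        exact hG
      · rw [Function.update_of_ne h]
        exact (hτi j).2.1
    · funext e; ext x
      simp only [Set.mem_setOf_eq, Finset.mem_singleton]
      constructor
      · intro hx j hj
        subst hj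
        rw [Function.update_self]
        exact hx
      · intro h
        have := h i rfl
        rwa [Function.update_self] at this
  · funext e; ext x; simp

end Prod

/-- in the soft product topology, the soft closure of a soft
cartesian product of soft sets is the soft cartesian product of their soft
closures. -/
theorem softClosure_softProd {I : Type*} {Xi : I → Type*} {Ei : I → Type*}
    (τi : ∀ i, Set (Ei i → Set (Xi i))) (hτi : ∀ i, IsSoftTopology (τi i))
    (F : ∀ i, Ei i → Set (Xi i)) :
    softClosure (generatedSoftTopology (productSubbase τi)) (softProd F) =
      softProd (fun i => softClosure (τi i) (F i)) := by
  classical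
  set τ := generatedSoftTopology (productSubbase τi) with hτdef
  have hτ : IsSoftTopology τ := isSoftTopology_generated _
  have hclosed : ∀ i, IsSoftClosed (τi i) (softClosure (τi i) (F i)) :=
    fun i => isSoftClosed_softClosure (hτi i) (F i)
  have hprodclosed : IsSoftClosed τ (softProd fun i => softClosure (τi i) (F i)) := by
    unfold IsSoftClosed
    have key : (fun e => (softProd (fun i => softClosure (τi i) (F i)) e)ᶜ)
        = fun e => ⋃ S ∈ {S : (∀ i, Ei i) → Set (∀ i, Xi i) | ∃ i, S =
            fun e' => {x : ∀ j, Xi j | x i ∈ (softClosure (τi i) (F i) (e' i))ᶜ}}, S e := by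
      funext e; ext x
      simp only [Set.mem_compl_iff, softProd, Set.mem_pi, Set.mem_univ, forall_true_left,
        Set.mem_iUnion, Set.mem_setOf_eq, not_forall]
      constructor
      · rintro ⟨i, hi⟩
        exact ⟨_, ⟨i, rfl⟩, hi⟩
      · rintro ⟨S, ⟨i, rfl⟩, hi⟩
        exact ⟨i, hi⟩
    rw [key]
    apply hτ.2.2.2
    rintro S ⟨i, rfl⟩
    exact subbase_subset_generated _ ⟨i, _, hclosed i, rfl⟩
  funext e; ext x
  constructor
  · intro hx
    refine softClosure_min hprodclosed ?_ e hx
    intro e' y hy i _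
    exact subset_softClosure (F i) (e' i) (hy i (Set.mem_univ i))
  · intro hx
    have hx' : ∀ i, x i ∈ softClosure (τi i) (F i) (e i) := fun i => hx i (Set.mem_univ i)
    by_cases hdeg : ∃ i₀, ∀ a, F i₀ a = ∅
    · obtain ⟨i₀, h0⟩ := hdeg
      exfalso
      have hcl : IsSoftClosed (τi i₀) (fun _ => (∅ : Set (Xi i₀))) := by
        unfold IsSoftClosed
        simpa using (hτi i₀).2.1
      have hsub : ∀ a, F i₀ a ⊆ (fun _ => (∅ : Set (Xi i₀))) a := by
        intro a; rw [h0 a]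
      exact softClosure_min hcl hsub (e i₀) (hx' i₀)
    · push_neg at hdeg
      rw [mem_softClosure_iff hτ]
      intro G hG hxG
      obtain ⟨𝒜, h𝒜, rfl⟩ :=
        generated_subset (isSoftTopology_tau' hτi) (subbase_subset_tau' hτi) hG
      simp only [Set.mem_iUnion] at hxG
      obtain ⟨B, hB𝒜, hxB⟩ := hxG
      obtain ⟨J, H, hH, rfl⟩ := h𝒜 hB𝒜
      have step : ∀ j, ∃ a, ∃ y : Xi j, y ∈ F j a ∧ (j ∈ J → y ∈ H j a) := by
        intro j
        by_cases hj : j ∈ J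
        · have hcl := hx' j
          rw [mem_softClosure_iff (hτi j)] at hcl
          obtain ⟨a, y, hyH, hyF⟩ := hcl (H j) (hH j) (hxB j hj)
          exact ⟨a, y, hyF, fun _ => hyH⟩
        · obtain ⟨a, y, hy⟩ := hdeg j
          exact ⟨a, y, hy, fun h => absurd h hj⟩
      choose a z hz1 hz2 using step
      refine ⟨a, z, ?_, ?_⟩
      · simp only [Set.mem_iUnion]
        exact ⟨_, hB𝒜, fun j hj => hz2 j hj⟩
      · intro i _
        exact hz1 i
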